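/- Let k ≥ 2 be an integer, let H_D be a diagonal graph on V = {(i,j) : 0 ≤ i,j ≤ k−1}, and suppose that no connected component of H_D contains both a vertex of the top row and a vertex of the bottom row. Then every vertex of degree 1 in the boundary graph H_B lies on the left border or on the right border of the grid; moreover, the number of degree-1 vertices of H_B on the left border is odd, and the number of degree-1 vertices of H_B on the right border is odd. -/

import Mathlib

open SimpleGraph

/-- `H` is a diagonal graph on `{(i,j) : 0 ≤ i,j ≤ k-1}`: for every `(i,j)` with
`0 ≤ i,j ≤ k-2`, exactly one of the two diagonals `{(i,j),(i+1,j+1)}` and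
`{(i,j+1),(i+1,j)}` of the corresponding 2×2 square is an edge of `H`, and `H` has no
other edges. -/
def IsDiagonalGraph (k : ℕ) (H : SimpleGraph (Fin k × Fin k)) : Prop :=
  (∀ (i j : ℕ) (hi : i + 1 < k) (hj : j + 1 < k),
    H.Adj (⟨i, by omega⟩, ⟨j, by omega⟩) (⟨i + 1, hi⟩, ⟨j + 1, hj⟩) ↔
      ¬ H.Adj (⟨i, by omega⟩, ⟨j + 1, hj⟩) (⟨i + 1, hi⟩, ⟨j, by omega⟩)) ∧
  (∀ u v : Fin k × Fin k, H.Adj u v →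
    ((u.1 : ℕ) + 1 = (v.1 : ℕ) ∨ (v.1 : ℕ) + 1 = (u.1 : ℕ)) ∧
    ((u.2 : ℕ) + 1 = (v.2 : ℕ) ∨ (v.2 : ℕ) + 1 = (u.2 : ℕ)))

/-- `V_U`: the set of vertices lying in connected components of `H` that contain at least one
vertex of the top row (row `k - 1`). -/
def upperVerts (k : ℕ) (H : SimpleGraph (Fin k × Fin k)) : Set (Fin k × Fin k) :=
  {v | ∃ u : Fin k × Fin k, (u.2 : ℕ) = k - 1 ∧ H.Reachable v u}

/-- The boundary graph `H_B` of a diagonal graph `H`: its edges are those edges `{a, b}` of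
`H` such that `a ∉ V_U`, `b ∉ V_U`, and exactly one of the two other corners `(a.1, b.2)`,
`(b.1, a.2)` of the 2×2 square having `{a, b}` as a diagonal lies in `V_U`. -/
def boundaryGraph (k : ℕ) (H : SimpleGraph (Fin k × Fin k)) :
    SimpleGraph (Fin k × Fin k) where
  Adj a b := H.Adj a b ∧ a ∉ upperVerts k H ∧ b ∉ upperVerts k H ∧
    ((a.1, b.2) ∈ upperVerts k H ↔ (b.1, a.2) ∉ upperVerts k H)
  symm := ⟨by
    rintro a b ⟨h1, h2, h3, h4⟩
    exact ⟨h1.symm, h3, h2, by tauto⟩⟩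
  loopless := ⟨fun a h => H.loopless.1 a h.1⟩

/-- The degree of a vertex in the boundary graph. -/
noncomputable def boundaryDegree (k : ℕ) (H : SimpleGraph (Fin k × Fin k))
    (v : Fin k × Fin k) : ℕ :=
  {u : Fin k × Fin k | (boundaryGraph k H).Adj v u}.ncard

section Helpers

variable {k : ℕ} {H : SimpleGraph (Fin k × Fin k)}

lemma adj_mem_upper {v w : Fin k × Fin k} (h : H.Adj v w) (hv : v ∈ upperVerts k H) :
    w ∈ upperVerts k H := by
  obtain ⟨u, hu, hr⟩ := hv
  exact ⟨u, hu, (h.symm.reachable).trans hr⟩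

lemma not_mem_of_bottom
    (hsep : ¬ ∃ u v : Fin k × Fin k,
      (u.2 : ℕ) = k - 1 ∧ (v.2 : ℕ) = 0 ∧ H.Reachable u v)
    {v : Fin k × Fin k} (hv2 : (v.2 : ℕ) = 0) : v ∉ upperVerts k H := by
  rintro ⟨u, hu, hr⟩
  exact hsep ⟨u, v, hu, hv2, hr.symm⟩

lemma mem_of_top {v : Fin k × Fin k} (hv2 : (v.2 : ℕ) = k - 1) : v ∈ upperVerts k H :=
  ⟨v, hv2, .refl v⟩

/-- The neighbour set of `v` in the boundary graph. -/
def nbrSet (k : ℕ) (H : SimpleGraph (Fin k × Fin k)) (v : Fin k × Fin k) :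
    Set (Fin k × Fin k) := {u | (boundaryGraph k H).Adj v u}

lemma boundaryDegree_eq (v : Fin k × Fin k) :
    boundaryDegree k H v = (nbrSet k H v).ncard := rfl

lemma nbr_iff {v u : Fin k × Fin k} (hv : v ∉ upperVerts k H) :
    u ∈ nbrSet k H v ↔
      H.Adj v u ∧ ¬(((v.1, u.2) ∈ upperVerts k H) ↔ ((u.1, v.2) ∈ upperVerts k H)) := by
  constructor
  · rintro ⟨h1, _, _, h4⟩
    exact ⟨h1, by tauto⟩
  · rintro ⟨h1, h2⟩
    exact ⟨h1, hv, fun hu => hv (adj_mem_upper h1.symm hu), by tauto⟩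

lemma nbr_coord (hH : IsDiagonalGraph k H) {v u : Fin k × Fin k} (h : u ∈ nbrSet k H v) :
    ((v.1 : ℕ) + 1 = (u.1 : ℕ) ∨ (u.1 : ℕ) + 1 = (v.1 : ℕ)) ∧
    ((v.2 : ℕ) + 1 = (u.2 : ℕ) ∨ (u.2 : ℕ) + 1 = (v.2 : ℕ)) :=
  hH.2 v u h.1

end Helpers
section Helpers2

variable {k : ℕ} {H : SimpleGraph (Fin k × Fin k)}

lemma square_iff (hH : IsDiagonalGraph k H) {a b : Fin k × Fin k}
    (h1 : (a.1 : ℕ) + 1 = (b.1 : ℕ)) (h2 : (a.2 : ℕ) + 1 = (b.2 : ℕ)) :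
    H.Adj a b ↔ ¬ H.Adj (a.1, b.2) (b.1, a.2) := by
  have hi : (a.1 : ℕ) + 1 < k := h1 ▸ b.1.isLt
  have hj : (a.2 : ℕ) + 1 < k := h2 ▸ b.2.isLt
  have key := hH.1 (a.1 : ℕ) (a.2 : ℕ) hi hj
  have e1 : (⟨(a.1 : ℕ) + 1, hi⟩ : Fin k) = b.1 := Fin.ext h1
  have e2 : (⟨(a.2 : ℕ) + 1, hj⟩ : Fin k) = b.2 := Fin.ext h2
  rw [e1, e2] at key
  exact key

lemma mem_nbr_iff (hH : IsDiagonalGraph k H) {v u : Fin k × Fin k}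
    (hv : v ∉ upperVerts k H)
    (hx : (v.1 : ℕ) + 1 = (u.1 : ℕ) ∨ (u.1 : ℕ) + 1 = (v.1 : ℕ))
    (hy : (v.2 : ℕ) + 1 = (u.2 : ℕ) ∨ (u.2 : ℕ) + 1 = (v.2 : ℕ)) :
    u ∈ nbrSet k H v ↔
      ¬(((v.1, u.2) ∈ upperVerts k H) ↔ ((u.1, v.2) ∈ upperVerts k H)) := by
  rw [nbr_iff hv]
  constructor
  · exact fun h => h.2
  · intro hsplit
    refine ⟨?_, hsplit⟩
    by_contra hadj
    apply hsplit
    have hPQ : H.Adj (v.1, u.2) (u.1, v.2) ∨ H.Adj (u.1, v.2) (v.1, u.2) := by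
      rcases hx with hx | hx <;> rcases hy with hy | hy
      · have hsq := square_iff hH (a := v) (b := u) hx hy
        exact Or.inl (of_not_not (fun hX => hadj (hsq.mpr hX)))
      · have hsq := square_iff hH (a := (v.1, u.2)) (b := (u.1, v.2))
          (by simpa using hx) (by simpa using hy)
        exact Or.inl (hsq.mpr hadj)
      · have hsq := square_iff hH (a := (u.1, v.2)) (b := (v.1, u.2))
          (by simpa using hx) (by simpa using hy)
        exact Or.inr (hsq.mpr (fun h => hadj h.symm))
      · have hsq := square_iff hH (a := u) (b := v) hx hy
        exact Or.inr (of_not_not (fun hX => hadj (hsq.mpr hX).symm))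
    rcases hPQ with h | h
    · exact ⟨fun hm => adj_mem_upper h hm, fun hm => adj_mem_upper h.symm hm⟩
    · exact ⟨fun hm => adj_mem_upper h.symm hm, fun hm => adj_mem_upper h hm⟩

end Helpers2
section Counting

open scoped Classical

variable {α : Type*}

lemma ncard_subset_single {S : Set α} {a : α} (h : S ⊆ {a}) :
    S.ncard = if a ∈ S then 1 else 0 := by
  split_ifs with ha
  · have : S = {a} := Set.Subset.antisymm h (by simpa using ha)
    simp [this]
  · have : S = ∅ := by
      ext x
      simp only [Set.mem_empty_iff_false, iff_false]
      intro hx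
      exact ha ((h hx) ▸ hx)
    simp [this]

lemma ncard_subset_pair {S : Set α} {a b : α} (hab : a ≠ b) (h : S ⊆ {a, b}) :
    S.ncard = (if a ∈ S then 1 else 0) + (if b ∈ S then 1 else 0) := by
  have hsplit : S = (S ∩ {a}) ∪ (S ∩ {b}) := by
    ext x; constructor
    · intro hx
      rcases h hx with h1 | h1 <;> simp_all
    · rintro (⟨hx, _⟩ | ⟨hx, _⟩) <;> exact hx
  have hdisj : Disjoint (S ∩ {a}) (S ∩ {b}) := by
    rw [Set.disjoint_left]
    rintro x ⟨_, rfl⟩ ⟨_, h2⟩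
    exact hab h2
  conv_lhs => rw [hsplit]
  rw [Set.ncard_union_eq hdisj (Set.toFinite _) (Set.toFinite _),
    ncard_subset_single (Set.inter_subset_right), ncard_subset_single (Set.inter_subset_right)]
  have e1 : a ∈ S ∩ {a} ↔ a ∈ S := by simp
  have e2 : b ∈ S ∩ {b} ↔ b ∈ S := by simp
  simp only [e1, e2]

lemma ncard_subset_quad {S : Set α} {a b c d : α} (hab : a ≠ b) (hcd : c ≠ d)
    (hac : a ≠ c) (had : a ≠ d) (hbc : b ≠ c) (hbd : b ≠ d)
    (h : S ⊆ {a, b, c, d}) :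
    S.ncard = (if a ∈ S then 1 else 0) + (if b ∈ S then 1 else 0)
      + (if c ∈ S then 1 else 0) + (if d ∈ S then 1 else 0) := by
  have hsplit : S = (S ∩ {a, b}) ∪ (S ∩ {c, d}) := by
    ext x; constructor
    · intro hx
      rcases h hx with h1 | h1 | h1 | h1 <;> simp_all
    · rintro (⟨hx, _⟩ | ⟨hx, _⟩) <;> exact hx
  have hdisj : Disjoint (S ∩ {a, b}) (S ∩ {c, d}) := by
    rw [Set.disjoint_left]
    rintro x ⟨-, hx1⟩ ⟨-, hx2⟩
    simp only [Set.mem_insert_iff, Set.mem_singleton_iff] at hx1 hx2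
    rcases hx1 with rfl | rfl <;> rcases hx2 with rfl | rfl
    · exact hac rfl
    · exact had rfl
    · exact hbc rfl
    · exact hbd rfl
  conv_lhs => rw [hsplit]
  rw [Set.ncard_union_eq hdisj (Set.toFinite _) (Set.toFinite _),
    ncard_subset_pair hab (Set.inter_subset_right),
    ncard_subset_pair hcd (Set.inter_subset_right)]
  have e1 : a ∈ S ∩ {a, b} ↔ a ∈ S := by simp
  have e2 : b ∈ S ∩ ({a, b} : Set α) ↔ b ∈ S := by simp
  have e3 : c ∈ S ∩ {c, d} ↔ c ∈ S := by simp
  have e4 : d ∈ S ∩ ({c, d} : Set α) ↔ d ∈ S := by simp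
  simp only [e1, e2, e3, e4]
  ring

end Counting
section Interior

open scoped Classical

variable {k : ℕ} {H : SimpleGraph (Fin k × Fin k)}

lemma interior_deg_ne_one (hH : IsDiagonalGraph k H)
    (hsep : ¬ ∃ u v : Fin k × Fin k,
      (u.2 : ℕ) = k - 1 ∧ (v.2 : ℕ) = 0 ∧ H.Reachable u v)
    {v : Fin k × Fin k} (hv : v ∉ upperVerts k H)
    (hi1 : 0 < (v.1 : ℕ)) (hi2 : (v.1 : ℕ) < k - 1) :
    boundaryDegree k H v ≠ 1 := by
  have hk : 2 ≤ k := by omega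
  have hik : (v.1 : ℕ) < k := v.1.isLt
  have hjk : (v.2 : ℕ) < k := v.2.isLt
  rcases Nat.lt_or_ge (v.2 : ℕ) (k - 1) with hjtop | hjtop
  swap
  · exact absurd (mem_of_top (by omega)) hv
  rcases Nat.eq_zero_or_pos (v.2 : ℕ) with hj0 | hj0
  · -- bottom row
    have hsub : nbrSet k H v ⊆
        {((⟨(v.1 : ℕ) - 1, by omega⟩, ⟨1, by omega⟩) : Fin k × Fin k),
         ((⟨(v.1 : ℕ) + 1, by omega⟩, ⟨1, by omega⟩) : Fin k × Fin k)} := by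
      intro u hu
      obtain ⟨hx, hy⟩ := nbr_coord hH hu
      simp only [Set.mem_insert_iff, Set.mem_singleton_iff]
      rcases hx with hx | hx
      · right; apply Prod.ext <;> apply Fin.ext <;> simp <;> omega
      · left; apply Prod.ext <;> apply Fin.ext <;> simp <;> omega
    have hab : ((⟨(v.1 : ℕ) - 1, by omega⟩, ⟨1, by omega⟩) : Fin k × Fin k) ≠
        (⟨(v.1 : ℕ) + 1, by omega⟩, ⟨1, by omega⟩) := by
      simp [Prod.ext_iff, Fin.ext_iff] <;> omega
    have hQa : ((⟨(v.1 : ℕ) - 1, by omega⟩, v.2) : Fin k × Fin k) ∉ upperVerts k H :=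
      not_mem_of_bottom hsep (by simpa using hj0)
    have hQb : ((⟨(v.1 : ℕ) + 1, by omega⟩, v.2) : Fin k × Fin k) ∉ upperVerts k H :=
      not_mem_of_bottom hsep (by simpa using hj0)
    have hma : ((⟨(v.1 : ℕ) - 1, by omega⟩, ⟨1, by omega⟩) : Fin k × Fin k) ∈ nbrSet k H v ↔
        ¬(((v.1, (⟨1, by omega⟩ : Fin k)) ∈ upperVerts k H) ↔
          (((⟨(v.1 : ℕ) - 1, by omega⟩ : Fin k), v.2) ∈ upperVerts k H)) :=
      mem_nbr_iff hH hv (by simp <;> omega) (by simp <;> omega)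
    have hmb : ((⟨(v.1 : ℕ) + 1, by omega⟩, ⟨1, by omega⟩) : Fin k × Fin k) ∈ nbrSet k H v ↔
        ¬(((v.1, (⟨1, by omega⟩ : Fin k)) ∈ upperVerts k H) ↔
          (((⟨(v.1 : ℕ) + 1, by omega⟩ : Fin k), v.2) ∈ upperVerts k H)) :=
      mem_nbr_iff hH hv (by simp <;> omega) (by simp <;> omega)
    rw [boundaryDegree_eq, ncard_subset_pair hab hsub]
    simp only [hma, hmb]
    by_cases hP : ((v.1, (⟨1, by omega⟩ : Fin k)) : Fin k × Fin k) ∈ upperVerts k H <;>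
      simp [hP, hQa, hQb]
  · -- interior in both coordinates
    have hsub : nbrSet k H v ⊆
        {((⟨(v.1 : ℕ) - 1, by omega⟩, ⟨(v.2 : ℕ) - 1, by omega⟩) : Fin k × Fin k),
         ((⟨(v.1 : ℕ) - 1, by omega⟩, ⟨(v.2 : ℕ) + 1, by omega⟩) : Fin k × Fin k),
         ((⟨(v.1 : ℕ) + 1, by omega⟩, ⟨(v.2 : ℕ) - 1, by omega⟩) : Fin k × Fin k),
         ((⟨(v.1 : ℕ) + 1, by omega⟩, ⟨(v.2 : ℕ) + 1, by omega⟩) : Fin k × Fin k)} := by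
      intro u hu
      obtain ⟨hx, hy⟩ := nbr_coord hH hu
      simp only [Set.mem_insert_iff, Set.mem_singleton_iff]
      rcases hx with hx | hx <;> rcases hy with hy | hy
      · right; right; right; apply Prod.ext <;> apply Fin.ext <;> simp <;> omega
      · right; right; left; apply Prod.ext <;> apply Fin.ext <;> simp <;> omega
      · right; left; apply Prod.ext <;> apply Fin.ext <;> simp <;> omega
      · left; apply Prod.ext <;> apply Fin.ext <;> simp <;> omega
    have hm1 : ((⟨(v.1 : ℕ) - 1, by omega⟩, ⟨(v.2 : ℕ) - 1, by omega⟩) : Fin k × Fin k)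
          ∈ nbrSet k H v ↔
        ¬(((v.1, (⟨(v.2 : ℕ) - 1, by omega⟩ : Fin k)) ∈ upperVerts k H) ↔
          (((⟨(v.1 : ℕ) - 1, by omega⟩ : Fin k), v.2) ∈ upperVerts k H)) :=
      mem_nbr_iff hH hv (by simp <;> omega) (by simp <;> omega)
    have hm2 : ((⟨(v.1 : ℕ) - 1, by omega⟩, ⟨(v.2 : ℕ) + 1, by omega⟩) : Fin k × Fin k)
          ∈ nbrSet k H v ↔
        ¬(((v.1, (⟨(v.2 : ℕ) + 1, by omega⟩ : Fin k)) ∈ upperVerts k H) ↔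
          (((⟨(v.1 : ℕ) - 1, by omega⟩ : Fin k), v.2) ∈ upperVerts k H)) :=
      mem_nbr_iff hH hv (by simp <;> omega) (by simp <;> omega)
    have hm3 : ((⟨(v.1 : ℕ) + 1, by omega⟩, ⟨(v.2 : ℕ) - 1, by omega⟩) : Fin k × Fin k)
          ∈ nbrSet k H v ↔
        ¬(((v.1, (⟨(v.2 : ℕ) - 1, by omega⟩ : Fin k)) ∈ upperVerts k H) ↔
          (((⟨(v.1 : ℕ) + 1, by omega⟩ : Fin k), v.2) ∈ upperVerts k H)) :=
      mem_nbr_iff hH hv (by simp <;> omega) (by simp <;> omega)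
    have hm4 : ((⟨(v.1 : ℕ) + 1, by omega⟩, ⟨(v.2 : ℕ) + 1, by omega⟩) : Fin k × Fin k)
          ∈ nbrSet k H v ↔
        ¬(((v.1, (⟨(v.2 : ℕ) + 1, by omega⟩ : Fin k)) ∈ upperVerts k H) ↔
          (((⟨(v.1 : ℕ) + 1, by omega⟩ : Fin k), v.2) ∈ upperVerts k H)) :=
      mem_nbr_iff hH hv (by simp <;> omega) (by simp <;> omega)
    rw [boundaryDegree_eq,
      ncard_subset_quad (by simp [Prod.ext_iff, Fin.ext_iff] <;> omega)
        (by simp [Prod.ext_iff, Fin.ext_iff] <;> omega)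
        (by simp [Prod.ext_iff, Fin.ext_iff] <;> omega)
        (by simp [Prod.ext_iff, Fin.ext_iff] <;> omega)
        (by simp [Prod.ext_iff, Fin.ext_iff] <;> omega)
        (by simp [Prod.ext_iff, Fin.ext_iff] <;> omega) hsub]
    simp only [hm1, hm2, hm3, hm4]
    by_cases hA : (((⟨(v.1 : ℕ) - 1, by omega⟩ : Fin k), v.2) : Fin k × Fin k)
        ∈ upperVerts k H <;>
    by_cases hB : (((⟨(v.1 : ℕ) + 1, by omega⟩ : Fin k), v.2) : Fin k × Fin k)
        ∈ upperVerts k H <;>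
    by_cases hC : ((v.1, (⟨(v.2 : ℕ) - 1, by omega⟩ : Fin k)) : Fin k × Fin k)
        ∈ upperVerts k H <;>
    by_cases hD : ((v.1, (⟨(v.2 : ℕ) + 1, by omega⟩ : Fin k)) : Fin k × Fin k)
        ∈ upperVerts k H <;>
      simp [hA, hB, hC, hD]

end Interior
section Border

open scoped Classical

variable {k : ℕ} {H : SimpleGraph (Fin k × Fin k)} {c c' : Fin k}

lemma border_deg_bottom (hH : IsDiagonalGraph k H)
    (hsep : ¬ ∃ u v : Fin k × Fin k,
      (u.2 : ℕ) = k - 1 ∧ (v.2 : ℕ) = 0 ∧ H.Reachable u v)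
    (hk : 2 ≤ k)
    (hcc' : (c : ℕ) + 1 = (c' : ℕ) ∨ (c' : ℕ) + 1 = (c : ℕ))
    (hcol : ∀ v u : Fin k × Fin k, v.1 = c → H.Adj v u → u.1 = c') :
    boundaryDegree k H (c, (⟨0, by omega⟩ : Fin k)) =
      if (c, (⟨1, by omega⟩ : Fin k)) ∈ upperVerts k H then 1 else 0 := by
  have hv : ((c, (⟨0, by omega⟩ : Fin k)) : Fin k × Fin k) ∉ upperVerts k H :=
    not_mem_of_bottom hsep rfl
  have hsub : nbrSet k H (c, (⟨0, by omega⟩ : Fin k)) ⊆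
      {((c', (⟨1, by omega⟩ : Fin k)) : Fin k × Fin k)} := by
    intro u hu
    obtain ⟨hx, hy⟩ := nbr_coord hH hu
    have h1 : u.1 = c' := hcol _ u rfl hu.1
    simp only [Set.mem_singleton_iff]
    apply Prod.ext
    · exact h1
    · apply Fin.ext; simp at hy ⊢; omega
  have hm : ((c', (⟨1, by omega⟩ : Fin k)) : Fin k × Fin k)
        ∈ nbrSet k H (c, (⟨0, by omega⟩ : Fin k)) ↔
      ¬(((c, (⟨1, by omega⟩ : Fin k)) ∈ upperVerts k H) ↔
        ((c', (⟨0, by omega⟩ : Fin k)) ∈ upperVerts k H)) :=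
    mem_nbr_iff hH hv (by simpa using hcc') (by simp)
  have hq : ((c', (⟨0, by omega⟩ : Fin k)) : Fin k × Fin k) ∉ upperVerts k H :=
    not_mem_of_bottom hsep rfl
  rw [boundaryDegree_eq, ncard_subset_single hsub]
  simp only [hm]
  by_cases hP : ((c, (⟨1, by omega⟩ : Fin k)) : Fin k × Fin k) ∈ upperVerts k H <;>
    simp [hP, hq]

lemma border_deg_mid (hH : IsDiagonalGraph k H)
    (hcc' : (c : ℕ) + 1 = (c' : ℕ) ∨ (c' : ℕ) + 1 = (c : ℕ))
    (hcol : ∀ v u : Fin k × Fin k, v.1 = c → H.Adj v u → u.1 = c')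
    {j : ℕ} (hj1 : 0 < j) (hj2 : j + 1 < k)
    (hv : ((c, (⟨j, by omega⟩ : Fin k)) : Fin k × Fin k) ∉ upperVerts k H) :
    boundaryDegree k H (c, (⟨j, by omega⟩ : Fin k)) =
      (if ¬(((c, (⟨j - 1, by omega⟩ : Fin k)) ∈ upperVerts k H) ↔
          ((c', (⟨j, by omega⟩ : Fin k)) ∈ upperVerts k H)) then 1 else 0) +
      (if ¬(((c, (⟨j + 1, by omega⟩ : Fin k)) ∈ upperVerts k H) ↔
          ((c', (⟨j, by omega⟩ : Fin k)) ∈ upperVerts k H)) then 1 else 0) := by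
  have hsub : nbrSet k H (c, (⟨j, by omega⟩ : Fin k)) ⊆
      {((c', (⟨j - 1, by omega⟩ : Fin k)) : Fin k × Fin k),
       ((c', (⟨j + 1, by omega⟩ : Fin k)) : Fin k × Fin k)} := by
    intro u hu
    obtain ⟨hx, hy⟩ := nbr_coord hH hu
    have h1 : u.1 = c' := hcol _ u rfl hu.1
    simp only [Set.mem_insert_iff, Set.mem_singleton_iff]
    rcases hy with hy | hy
    · right; apply Prod.ext
      · exact h1
      · apply Fin.ext; simp at hy ⊢; omega
    · left; apply Prod.ext
      · exact h1
      · apply Fin.ext; simp at hy ⊢; omega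
  have hne : ((c', (⟨j - 1, by omega⟩ : Fin k)) : Fin k × Fin k) ≠
      (c', (⟨j + 1, by omega⟩ : Fin k)) := by
    simp [Prod.ext_iff, Fin.ext_iff] <;> omega
  have hm1 : ((c', (⟨j - 1, by omega⟩ : Fin k)) : Fin k × Fin k)
        ∈ nbrSet k H (c, (⟨j, by omega⟩ : Fin k)) ↔
      ¬(((c, (⟨j - 1, by omega⟩ : Fin k)) ∈ upperVerts k H) ↔
        ((c', (⟨j, by omega⟩ : Fin k)) ∈ upperVerts k H)) :=
    mem_nbr_iff hH hv (by simpa using hcc') (by simp <;> omega)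
  have hm2 : ((c', (⟨j + 1, by omega⟩ : Fin k)) : Fin k × Fin k)
        ∈ nbrSet k H (c, (⟨j, by omega⟩ : Fin k)) ↔
      ¬(((c, (⟨j + 1, by omega⟩ : Fin k)) ∈ upperVerts k H) ↔
        ((c', (⟨j, by omega⟩ : Fin k)) ∈ upperVerts k H)) :=
    mem_nbr_iff hH hv (by simpa using hcc') (by simp <;> omega)
  rw [boundaryDegree_eq, ncard_subset_pair hne hsub]
  simp only [hm1, hm2]

end Border
section Parity

open scoped Classical

/-- `j`-th vertex of column `c` is a degree-one vertex of the boundary graph outside `V_U`. -/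
def borderP (k : ℕ) (H : SimpleGraph (Fin k × Fin k)) (c : Fin k) (j : ℕ) : Prop :=
  ∃ hj : j < k, ((c, (⟨j, hj⟩ : Fin k)) : Fin k × Fin k) ∉ upperVerts k H ∧
    boundaryDegree k H (c, (⟨j, hj⟩ : Fin k)) = 1

/-- `j`-th vertex of column `c` lies in `V_U`. -/
def colU (k : ℕ) (H : SimpleGraph (Fin k × Fin k)) (c : Fin k) (j : ℕ) : Prop :=
  ∃ hj : j < k, ((c, (⟨j, hj⟩ : Fin k)) : Fin k × Fin k) ∈ upperVerts k H

variable {k : ℕ} {H : SimpleGraph (Fin k × Fin k)} {c c' : Fin k}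

lemma colU_mem {j : ℕ} (hj : j < k) :
    colU k H c j ↔ ((c, (⟨j, hj⟩ : Fin k)) : Fin k × Fin k) ∈ upperVerts k H :=
  ⟨fun ⟨_, p⟩ => p, fun p => ⟨hj, p⟩⟩

lemma borderP_iff {j : ℕ} (hj : j < k) (hnot : ¬ colU k H c j) :
    borderP k H c j ↔ boundaryDegree k H (c, (⟨j, hj⟩ : Fin k)) = 1 :=
  ⟨fun ⟨_, _, d⟩ => d, fun d => ⟨hj, fun p => hnot ⟨hj, p⟩, d⟩⟩

lemma borderP_false {j : ℕ} (ht : colU k H c j) : ¬ borderP k H c j := by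
  rintro ⟨h, hn, -⟩
  obtain ⟨h', p⟩ := ht
  exact hn p

lemma border_deg_bottom' (hH : IsDiagonalGraph k H)
    (hsep : ¬ ∃ u v : Fin k × Fin k,
      (u.2 : ℕ) = k - 1 ∧ (v.2 : ℕ) = 0 ∧ H.Reachable u v)
    (hk : 2 ≤ k)
    (hcc' : (c : ℕ) + 1 = (c' : ℕ) ∨ (c' : ℕ) + 1 = (c : ℕ))
    (hcol : ∀ v u : Fin k × Fin k, v.1 = c → H.Adj v u → u.1 = c') :
    boundaryDegree k H (c, (⟨0, by omega⟩ : Fin k)) =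
      if colU k H c 1 then 1 else 0 := by
  have e1 : ((c, (⟨1, by omega⟩ : Fin k)) : Fin k × Fin k) ∈ upperVerts k H ↔
      colU k H c 1 := (colU_mem (by omega)).symm
  rw [border_deg_bottom hH hsep hk hcc' hcol]
  simp only [e1]

lemma border_deg_mid' (hH : IsDiagonalGraph k H)
    (hcc' : (c : ℕ) + 1 = (c' : ℕ) ∨ (c' : ℕ) + 1 = (c : ℕ))
    (hcol : ∀ v u : Fin k × Fin k, v.1 = c → H.Adj v u → u.1 = c')
    {j : ℕ} (hj1 : 0 < j) (hj2 : j + 1 < k) (hv : ¬ colU k H c j) :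
    boundaryDegree k H (c, (⟨j, by omega⟩ : Fin k)) =
      (if ¬(colU k H c (j - 1) ↔ colU k H c' j) then 1 else 0) +
      (if ¬(colU k H c (j + 1) ↔ colU k H c' j) then 1 else 0) := by
  have e1 : ((c, (⟨j - 1, by omega⟩ : Fin k)) : Fin k × Fin k) ∈ upperVerts k H ↔
      colU k H c (j - 1) := (colU_mem (by omega)).symm
  have e2 : ((c, (⟨j + 1, by omega⟩ : Fin k)) : Fin k × Fin k) ∈ upperVerts k H ↔
      colU k H c (j + 1) := (colU_mem (by omega)).symm
  have e3 : ((c', (⟨j, by omega⟩ : Fin k)) : Fin k × Fin k) ∈ upperVerts k H ↔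
      colU k H c' j := (colU_mem (by omega)).symm
  rw [border_deg_mid hH hcc' hcol hj1 hj2 (fun p => hv ⟨by omega, p⟩)]
  simp only [e1, e2, e3]

lemma border_parity (hH : IsDiagonalGraph k H)
    (hsep : ¬ ∃ u v : Fin k × Fin k,
      (u.2 : ℕ) = k - 1 ∧ (v.2 : ℕ) = 0 ∧ H.Reachable u v)
    (hk : 2 ≤ k)
    (hcc' : (c : ℕ) + 1 = (c' : ℕ) ∨ (c' : ℕ) + 1 = (c : ℕ))
    (hcol : ∀ v u : Fin k × Fin k, v.1 = c → H.Adj v u → u.1 = c') :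
    ∀ m, m + 1 < k →
      ((Finset.range (m + 1)).filter (borderP k H c)).card % 2 =
        if colU k H c m ∨ colU k H c (m + 1) then 1 else 0 := by
  intro m
  induction m with
  | zero =>
    intro hm
    have h0 : ¬ colU k H c 0 := by
      rintro ⟨h, p⟩
      exact not_mem_of_bottom hsep rfl p
    have hb0 : borderP k H c 0 ↔ colU k H c 1 := by
      rw [borderP_iff (by omega) h0, border_deg_bottom' hH hsep hk hcc' hcol]
      by_cases h1 : colU k H c 1 <;> simp [h1]
    by_cases h1 : colU k H c 1 <;>
      simp [Finset.range_one, Finset.filter_singleton, hb0, h0, h1]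
  | succ n ih =>
    intro hm
    have ihn := ih (by omega)
    have hcard : ((Finset.range (n + 1 + 1)).filter (borderP k H c)).card =
        ((Finset.range (n + 1)).filter (borderP k H c)).card +
          (if borderP k H c (n + 1) then 1 else 0) := by
      rw [Finset.range_add_one, Finset.filter_insert]
      split_ifs
      · rw [Finset.card_insert_of_notMem (by simp)]
      · simp
    rw [hcard]
    by_cases t1 : colU k H c (n + 1)
    · -- vertex in U: contributes 0
      rw [if_neg (borderP_false t1), if_pos (Or.inl t1)]
      rw [if_pos (Or.inr t1)] at ihn
      omega
    · have hbp : borderP k H c (n + 1) ↔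
          boundaryDegree k H (c, (⟨n + 1, by omega⟩ : Fin k)) = 1 :=
        borderP_iff (by omega) t1
      have hdeg := border_deg_mid' hH hcc' hcol (j := n + 1) (by omega) (by omega) t1
      simp only [Nat.add_sub_cancel] at hdeg
      by_cases t0 : colU k H c n <;> by_cases t2 : colU k H c (n + 2) <;>
        by_cases hs : colU k H c' (n + 1) <;>
        simp [hbp, hdeg, t0, t1, t2, hs] at ihn ⊢ <;> omega
  
end Parity
section Count

open scoped Classical

variable {k : ℕ} {H : SimpleGraph (Fin k × Fin k)} {c c' : Fin k}

lemma border_count_odd (hH : IsDiagonalGraph k H)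
    (hsep : ¬ ∃ u v : Fin k × Fin k,
      (u.2 : ℕ) = k - 1 ∧ (v.2 : ℕ) = 0 ∧ H.Reachable u v)
    (hk : 2 ≤ k)
    (hcc' : (c : ℕ) + 1 = (c' : ℕ) ∨ (c' : ℕ) + 1 = (c : ℕ))
    (hcol : ∀ v u : Fin k × Fin k, v.1 = c → H.Adj v u → u.1 = c') :
    Odd ({v : Fin k × Fin k | v ∉ upperVerts k H ∧ (v.1 : ℕ) = (c : ℕ) ∧
      boundaryDegree k H v = 1}.ncard) := by
  have himg : {v : Fin k × Fin k | v ∉ upperVerts k H ∧ (v.1 : ℕ) = (c : ℕ) ∧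
      boundaryDegree k H v = 1} =
      Prod.mk c '' {y : Fin k | (c, y) ∉ upperVerts k H ∧ boundaryDegree k H (c, y) = 1} := by
    ext ⟨x, y⟩
    constructor
    · rintro ⟨h1, h2, h3⟩
      have hx : x = c := Fin.ext h2
      subst hx
      exact ⟨y, ⟨h1, h3⟩, rfl⟩
    · rintro ⟨y', ⟨h1, h3⟩, heq⟩
      obtain ⟨rfl, rfl⟩ := Prod.mk.injEq .. ▸ And.intro (congrArg Prod.fst heq)
        (congrArg Prod.snd heq)
      exact ⟨h1, rfl, h3⟩
  rw [himg, Set.ncard_image_of_injective _ (fun y1 y2 h => by simpa using congrArg Prod.snd h)]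
  have hfin : {y : Fin k | (c, y) ∉ upperVerts k H ∧ boundaryDegree k H (c, y) = 1} =
      ↑(Finset.univ.filter
        (fun y : Fin k => (c, y) ∉ upperVerts k H ∧ boundaryDegree k H (c, y) = 1)) := by
    ext y; simp
  rw [hfin, Set.ncard_coe_finset]
  have hbij : (Finset.univ.filter
      (fun y : Fin k => (c, y) ∉ upperVerts k H ∧ boundaryDegree k H (c, y) = 1)).card =
      ((Finset.range k).filter (borderP k H c)).card := by
    refine Finset.card_bij' (fun y _ => (y : ℕ))
      (fun n hn => (⟨n, Finset.mem_range.mp (Finset.mem_filter.mp hn).1⟩ : Fin k))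
      ?_ ?_ ?_ ?_
    · intro y hy
      simp only [Finset.mem_filter, Finset.mem_univ, true_and] at hy
      simp only [Finset.mem_filter, Finset.mem_range]
      exact ⟨y.isLt, y.isLt, hy.1, hy.2⟩
    · intro n hn
      simp only [Finset.mem_filter, Finset.mem_range] at hn
      obtain ⟨hnk, hk', h1, h2⟩ := hn
      simp only [Finset.mem_filter, Finset.mem_univ, true_and]
      exact ⟨h1, h2⟩
    · intro y hy; exact Fin.eta y y.isLt
    · intro n hn; rfl
  rw [hbij, Nat.odd_iff]
  have hk1 : k = (k - 1) + 1 := by omega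
  have htop : colU k H c (k - 1) := ⟨by omega, mem_of_top rfl⟩
  have hr : Finset.range k = insert (k - 1) (Finset.range (k - 1)) := by
    conv_lhs => rw [hk1]
    rw [Finset.range_add_one]
  have hsplit : ((Finset.range k).filter (borderP k H c)).card =
      ((Finset.range (k - 1)).filter (borderP k H c)).card := by
    rw [hr, Finset.filter_insert, if_neg (borderP_false htop)]
  rw [hsplit]
  have hk2 : (k - 2) + 1 = k - 1 := by omega
  have hpar := border_parity hH hsep hk hcc' hcol (k - 2) (by omega)
  rw [hk2] at hpar
  rw [hpar, if_pos (Or.inr htop)]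

end Count

/-- If no connected component of a diagonal graph `H` contains both a vertex of the top row
and a vertex of the bottom row, then every degree-1 vertex of the boundary graph `H_B` lies
on the left border (column 0) or the right border (column `k - 1`); moreover, the number of
degree-1 vertices of `H_B` on the left border is odd, and likewise on the right border. -/
theorem boundaryGraph_degree_one (k : ℕ) (hk : 2 ≤ k) (H : SimpleGraph (Fin k × Fin k))
    (hH : IsDiagonalGraph k H)
    (hsep : ¬ ∃ u v : Fin k × Fin k,
      (u.2 : ℕ) = k - 1 ∧ (v.2 : ℕ) = 0 ∧ H.Reachable u v) :
    (∀ v : Fin k × Fin k, v ∉ upperVerts k H → boundaryDegree k H v = 1 →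
      (v.1 : ℕ) = 0 ∨ (v.1 : ℕ) = k - 1) ∧
    Odd ({v : Fin k × Fin k | v ∉ upperVerts k H ∧ (v.1 : ℕ) = 0 ∧
      boundaryDegree k H v = 1}.ncard) ∧
    Odd ({v : Fin k × Fin k | v ∉ upperVerts k H ∧ (v.1 : ℕ) = k - 1 ∧
      boundaryDegree k H v = 1}.ncard) := by
  refine ⟨?_, ?_, ?_⟩
  · intro v hv hdeg
    by_contra hcon
    push_neg at hcon
    obtain ⟨h1, h2⟩ := hcon
    have hik : (v.1 : ℕ) < k := v.1.isLt
    exact interior_deg_ne_one hH hsep hv (by omega) (by omega) hdeg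
  · have hcol : ∀ v u : Fin k × Fin k, v.1 = (⟨0, by omega⟩ : Fin k) →
        H.Adj v u → u.1 = (⟨1, by omega⟩ : Fin k) := by
      intro v u hv1 hadj
      obtain ⟨hx, -⟩ := hH.2 v u hadj
      have hc := congrArg Fin.val hv1
      simp only [] at hc
      apply Fin.ext
      simp only []
      omega
    have hodd := border_count_odd (c := (⟨0, by omega⟩ : Fin k))
      (c' := (⟨1, by omega⟩ : Fin k)) hH hsep hk (Or.inl rfl) hcol
    exact hodd
  · have hcol : ∀ v u : Fin k × Fin k, v.1 = (⟨k - 1, by omega⟩ : Fin k) →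
        H.Adj v u → u.1 = (⟨k - 2, by omega⟩ : Fin k) := by
      intro v u hv1 hadj
      obtain ⟨hx, -⟩ := hH.2 v u hadj
      have hc := congrArg Fin.val hv1
      simp only [] at hc
      have hu : (u.1 : ℕ) < k := u.1.isLt
      apply Fin.ext
      simp only []
      omega
    have hodd := border_count_odd (c := (⟨k - 1, by omega⟩ : Fin k))
      (c' := (⟨k - 2, by omega⟩ : Fin k)) hH hsep hk (Or.inr (by simp; omega)) hcol
    exact hodd
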